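/- (Log-radius alignment.) Let n > 0 and d > 0 be real numbers and σ > 0. Define the scale s = exp((ψ(n/2) − ψ(d/2))/2), where ψ is the digamma function. Then ∫₀^∞ log(s·σ·√t) · t^{d/2 − 1} e^{−t/2} / (2^{d/2} Γ(d/2)) dt = log σ + (1/2)(ψ(n/2) + log 2). In particular, the expected log-radius of a block with radius σ√T, T chi-squared with d degrees of freedom, after rescaling by s(n,d), depends only on σ and n and not on the block dimension d. -/

import Mathlib

open Set MeasureTheory Filter

/-- The digamma function: the derivative of `log ∘ Γ` on the reals. -/
noncomputable def digamma (s : ℝ) : ℝ := deriv (fun x : ℝ => Real.log (Real.Gamma x)) s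

section aux

lemma point_eq (a t : ℝ) (ht : 0 < t) :
    (t : ℂ) ^ ((a : ℂ) - 1) • (Real.exp (-t / 2) : ℂ)
      = ((t ^ (a - 1) * Real.exp (-t / 2) : ℝ) : ℂ) := by
  rw [smul_eq_mul, Complex.ofReal_mul, Complex.ofReal_cpow ht.le]
  push_cast
  ring

lemma point_eq_log (a t : ℝ) (ht : 0 < t) :
    (t : ℂ) ^ ((a : ℂ) - 1) • (Real.log t • (Real.exp (-t / 2) : ℂ))
      = ((Real.log t * (t ^ (a - 1) * Real.exp (-t / 2)) : ℝ) : ℂ) := by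
  rw [Complex.real_smul, smul_eq_mul, Complex.ofReal_mul, Complex.ofReal_mul,
    Complex.ofReal_cpow ht.le]
  push_cast
  ring

lemma mellin_exp_half (x : ℝ) :
    mellin (fun t : ℝ => (Real.exp (-t / 2) : ℂ)) (x : ℂ)
      = ((∫ t in Ioi (0 : ℝ), t ^ (x - 1) * Real.exp (-t / 2)) : ℝ) := by
  rw [mellin]
  calc ∫ t in Ioi (0 : ℝ), (t : ℂ) ^ ((x : ℂ) - 1) • (Real.exp (-t / 2) : ℂ)
      = ∫ t in Ioi (0 : ℝ), ((t ^ (x - 1) * Real.exp (-t / 2) : ℝ) : ℂ) :=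
        setIntegral_congr_fun measurableSet_Ioi (fun t ht => point_eq x t ht)
    _ = _ := integral_ofReal

lemma mellin_log_exp_half (x : ℝ) :
    mellin (fun t : ℝ => Real.log t • (Real.exp (-t / 2) : ℂ)) (x : ℂ)
      = ((∫ t in Ioi (0 : ℝ), Real.log t * (t ^ (x - 1) * Real.exp (-t / 2))) : ℝ) := by
  rw [mellin]
  calc ∫ t in Ioi (0 : ℝ), (t : ℂ) ^ ((x : ℂ) - 1) • (Real.log t • (Real.exp (-t / 2) : ℂ))
      = ∫ t in Ioi (0 : ℝ), ((Real.log t * (t ^ (x - 1) * Real.exp (-t / 2)) : ℝ) : ℂ) :=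
        setIntegral_congr_fun measurableSet_Ioi (fun t ht => point_eq_log x t ht)
    _ = _ := integral_ofReal

lemma exp_half_props (a : ℝ) :
    LocallyIntegrableOn (fun t : ℝ => (Real.exp (-t / 2) : ℂ)) (Ioi 0) ∧
    (fun t : ℝ => (Real.exp (-t / 2) : ℂ)) =O[atTop] (· ^ (-(a + 1))) ∧
    (fun t : ℝ => (Real.exp (-t / 2) : ℂ)) =O[nhdsWithin 0 (Ioi 0)] (· ^ (-(0 : ℝ))) := by
  refine ⟨?_, ?_, ?_⟩
  · refine (Continuous.continuousOn ?_).locallyIntegrableOn measurableSet_Ioi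
    fun_prop
  · rw [← Asymptotics.isBigO_norm_left]
    simp_rw [Complex.norm_real,
      Asymptotics.isBigO_norm_left]
    have := (isLittleO_exp_neg_mul_rpow_atTop (one_half_pos) (-(a + 1))).isBigO
    refine this.congr' (Eventually.of_forall fun t => ?_) (Eventually.of_forall fun t => rfl)
    ring_nf
  · simp_rw [neg_zero, Real.rpow_zero]
    refine Asymptotics.isBigO_const_of_tendsto (?_ : Tendsto _ _ (nhds (1 : ℂ))) one_ne_zero
    have : ((1 : ℂ)) = ((Real.exp (-(0:ℝ) / 2) : ℝ) : ℂ) := by norm_num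
    rw [this]
    exact (Complex.continuous_ofReal.comp
      (Real.continuous_exp.comp (by fun_prop))).continuousWithinAt

/-- Integrability of the chi-squared-type integrands, and differentiability in the exponent. -/
lemma key_integrable (a : ℝ) (ha : 0 < a) :
    IntegrableOn (fun t : ℝ => Real.log t * (t ^ (a - 1) * Real.exp (-t / 2))) (Ioi 0) ∧
    IntegrableOn (fun t : ℝ => t ^ (a - 1) * Real.exp (-t / 2)) (Ioi 0) ∧
    HasDerivAt (fun x : ℝ => ∫ t in Ioi (0 : ℝ), t ^ (x - 1) * Real.exp (-t / 2))
      (∫ t in Ioi (0 : ℝ), Real.log t * (t ^ (a - 1) * Real.exp (-t / 2))) a := by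
  obtain ⟨hfc, hf_top, hf_bot⟩ := exp_half_props a
  have hretop : (a : ℂ).re < a + 1 := by simpa using lt_add_one a
  have hrebot : (0 : ℝ) < (a : ℂ).re := by simpa using ha
  obtain ⟨hconv, hderiv⟩ :=
    mellin_hasDerivAt_of_isBigO_rpow (E := ℂ) hfc hf_top hretop hf_bot hrebot
  have hconv0 : MellinConvergent (fun t : ℝ => (Real.exp (-t / 2) : ℂ)) (a : ℂ) :=
    mellinConvergent_of_isBigO_rpow hfc hf_top hretop hf_bot hrebot
  refine ⟨?_, ?_, ?_⟩
  · refine MeasureTheory.IntegrableOn.congr_fun hconv.re (fun t ht => ?_) measurableSet_Ioi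
    simp only [point_eq_log a t ht]
    norm_cast
  · refine MeasureTheory.IntegrableOn.congr_fun hconv0.re (fun t ht => ?_) measurableSet_Ioi
    simp only [point_eq a t ht]
    norm_cast
  · have h2 := hderiv.real_of_complex
    have hfun : (fun x : ℝ => (mellin (fun t : ℝ => (Real.exp (-t / 2) : ℂ)) (x : ℂ)).re)
        = fun x : ℝ => ∫ t in Ioi (0 : ℝ), t ^ (x - 1) * Real.exp (-t / 2) := by
      funext x; rw [mellin_exp_half x, Complex.ofReal_re]
    have hval : (mellin (fun t : ℝ => Real.log t • (Real.exp (-t / 2) : ℂ)) ((a : ℝ) : ℂ)).re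
        = ∫ t in Ioi (0 : ℝ), Real.log t * (t ^ (a - 1) * Real.exp (-t / 2)) := by
      rw [mellin_log_exp_half a, Complex.ofReal_re]
    rw [hfun, hval] at h2
    exact h2

/-- The normalization integral of the chi-squared density. -/
lemma integral_exp_half_val (a : ℝ) (ha : 0 < a) :
    ∫ t in Ioi (0 : ℝ), t ^ (a - 1) * Real.exp (-t / 2) = 2 ^ a * Real.Gamma a := by
  have h := integral_rpow_mul_exp_neg_mul_rpow (p := 1) (q := a - 1) (b := 1/2)
    one_pos (by linarith) (by norm_num)
  have heq : EqOn (fun t : ℝ => t ^ (a - 1) * Real.exp (-(1/2) * t ^ (1:ℝ)))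
      (fun t : ℝ => t ^ (a - 1) * Real.exp (-t / 2)) (Ioi 0) := by
    intro t ht
    simp only [Real.rpow_one]
    ring_nf
  rw [setIntegral_congr_fun measurableSet_Ioi heq] at h
  rw [h]
  rw [show a - 1 + 1 = a by ring]
  rw [div_one, div_one, one_div, Real.inv_rpow (by norm_num), Real.rpow_neg (by norm_num),
    inv_inv]
  ring

/-- The log-moment of the chi-squared-type integrand, via differentiation under the integral. -/
lemma integral_log_exp_half_val (a : ℝ) (ha : 0 < a) :
    ∫ t in Ioi (0 : ℝ), Real.log t * (t ^ (a - 1) * Real.exp (-t / 2))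
      = 2 ^ a * Real.Gamma a * (Real.log 2 + digamma a) := by
  obtain ⟨hint, hint0, hder⟩ := key_integrable a ha
  have hΓd : DifferentiableAt ℝ Real.Gamma a := by
    refine Real.differentiableAt_Gamma (fun m => ?_)
    have : (0:ℝ) ≤ m := Nat.cast_nonneg m
    intro hcon; rw [hcon] at ha; linarith
  have hΓ := hΓd.hasDerivAt
  have h2 : HasDerivAt (fun x : ℝ => (2:ℝ) ^ x) ((2:ℝ) ^ a * Real.log 2) a :=
    (Real.hasStrictDerivAt_const_rpow two_pos a).hasDerivAt
  have hprod := h2.mul hΓ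
  have heq : (fun x : ℝ => ∫ t in Ioi (0:ℝ), t ^ (x - 1) * Real.exp (-t / 2))
      =ᶠ[nhds a] (fun x : ℝ => (2:ℝ) ^ x * Real.Gamma x) := by
    filter_upwards [eventually_gt_nhds ha] with x hx
    exact integral_exp_half_val x hx
  have hder' := hder.congr_of_eventuallyEq heq.symm
  have huniq := hder'.unique hprod
  have hΓpos := Real.Gamma_pos_of_pos ha
  have hlog : HasDerivAt (fun x : ℝ => Real.log (Real.Gamma x))
      ((Real.Gamma a)⁻¹ * deriv Real.Gamma a) a :=
    (Real.hasDerivAt_log hΓpos.ne').comp a hΓ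
  have hdig : digamma a = (Real.Gamma a)⁻¹ * deriv Real.Gamma a := hlog.deriv
  rw [huniq, hdig]
  field_simp

end aux

/-- **Log-radius alignment.**
Let `n, d, σ > 0` and set the scale `s = exp((ψ(n/2) - ψ(d/2))/2)`.  Then the
expected log-radius of a block with radius `σ·√T`, `T ~ χ²_d`, after rescaling
by `s`, equals `log σ + (1/2)(ψ(n/2) + log 2)`; in particular it depends only
on `σ` and `n`, not on the block dimension `d`. -/
theorem log_radius_alignment (n d σ : ℝ) (hn : 0 < n) (hd : 0 < d) (hσ : 0 < σ)
    (s : ℝ) (hs : s = Real.exp ((digamma (n / 2) - digamma (d / 2)) / 2)) :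
    (∫ t in Set.Ioi (0 : ℝ),
        Real.log (s * σ * Real.sqrt t) * (t ^ (d / 2 - 1) * Real.exp (-t / 2) /
          (2 ^ (d / 2) * Real.Gamma (d / 2))))
      = Real.log σ + (1 / 2) * (digamma (n / 2) + Real.log 2) := by
  have ha : 0 < d / 2 := by linarith
  obtain ⟨hint, hint0, -⟩ := key_integrable (d / 2) ha
  have hΓpos := Real.Gamma_pos_of_pos ha
  have hCpos : (0:ℝ) < 2 ^ (d / 2) * Real.Gamma (d / 2) :=
    mul_pos (Real.rpow_pos_of_pos two_pos _) hΓpos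
  have hspos : 0 < s := hs ▸ Real.exp_pos _
  have hre : EqOn
      (fun t : ℝ => Real.log (s * σ * Real.sqrt t) * (t ^ (d / 2 - 1) * Real.exp (-t / 2) /
          (2 ^ (d / 2) * Real.Gamma (d / 2))))
      (fun t : ℝ => (2 ^ (d / 2) * Real.Gamma (d / 2))⁻¹ *
          ((Real.log s + Real.log σ) * (t ^ (d / 2 - 1) * Real.exp (-t / 2))
            + 2⁻¹ * (Real.log t * (t ^ (d / 2 - 1) * Real.exp (-t / 2))))) (Ioi 0) := by
    intro t ht
    have h1 : Real.log (s * σ * Real.sqrt t)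
        = Real.log s + Real.log σ + 2⁻¹ * Real.log t := by
      rw [Real.log_mul (by positivity) (Real.sqrt_pos.mpr ht).ne',
        Real.log_mul hspos.ne' hσ.ne', Real.log_sqrt ht.le]
      ring
    simp only [h1]
    field_simp
  rw [setIntegral_congr_fun measurableSet_Ioi hre, integral_const_mul,
    integral_add (hint0.const_mul _) (hint.const_mul _), integral_const_mul, integral_const_mul,
    integral_exp_half_val _ ha, integral_log_exp_half_val _ ha]
  have hlogs : Real.log s = (digamma (n / 2) - digamma (d / 2)) / 2 := by
    rw [hs, Real.log_exp]
  rw [hlogs]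
  field_simp
  ring
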